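/- arXiv:2510.14542 — 4 statements merged into one kernel-verified Lean document; each statement's English description precedes it below -/
import Mathlib

section
/- The layer normalization map LN(z) = γ₁ ⊙ (z − μ(z)·1)/σ(z) + γ₂, where μ(z) = (1/m)·1ᵀz and σ(z) = √((1/m)‖z − μ(z)·1‖² + ε), is Lipschitz on R^m with Lipschitz constant at most ‖γ₁‖_∞ / √ε. -/
lemma LN_key (M A B c t ε : ℝ) (hM : 1 ≤ M) (hA : 0 ≤ A) (hB : 0 ≤ B)
    (hc : c ≤ A * B) (hε : 0 < ε)
    (ht : t ^ 2 = (A ^ 2 / M + ε) * (B ^ 2 / M + ε)) (ht0 : 0 < t) :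
    A ^ 2 / (A ^ 2 / M + ε) + B ^ 2 / (B ^ 2 / M + ε) - 2 * c / t
      ≤ (A ^ 2 + B ^ 2 - 2 * c) / ε := by
  have hM0 : (0:ℝ) < M := by linarith
  have ha' : (0:ℝ) < A ^ 2 + M * ε := by positivity
  have hb' : (0:ℝ) < B ^ 2 + M * ε := by positivity
  have htM : M ^ 2 * t ^ 2 = (A ^ 2 + M * ε) * (B ^ 2 + M * ε) := by
    field_simp at ht; nlinarith [ht]
  have htgeM : ε * M + A * B ≤ t * M := by
    have h1 : (ε * M + A * B) ^ 2 ≤ (t * M) ^ 2 := by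
      nlinarith [mul_nonneg (mul_nonneg hε.le hM0.le) (sq_nonneg (A - B))]
    nlinarith [mul_pos ht0 hM0, sq_nonneg (ε * M + A * B)]
  have htε : ε ≤ t := by nlinarith [mul_nonneg hA hB]
  have key5M : 2 * A * B * M ^ 2 * (t * (t - ε)) ≤
      A ^ 4 * (B ^ 2 + M * ε) + B ^ 4 * (A ^ 2 + M * ε) := by
    have hsub : 2 * A * B * M ^ 2 * t ^ 2
        = 2 * A * B * ((A ^ 2 + M * ε) * (B ^ 2 + M * ε)) := by
      linear_combination (2 * A * B) * htM
    nlinarith [mul_nonneg (mul_nonneg (mul_nonneg hA hB) (mul_nonneg hM0.le hε.le))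
        (sub_nonneg.2 htgeM),
      sq_nonneg (A * B * (A - B)),
      mul_nonneg (mul_nonneg hM0.le hε.le)
        (mul_nonneg (add_nonneg (sq_nonneg A) (sq_nonneg B)) (sq_nonneg (A - B)))]
  have e1 : A ^ 2 / M + ε = (A ^ 2 + M * ε) / M := by field_simp
  have e2 : B ^ 2 / M + ε = (B ^ 2 + M * ε) / M := by field_simp
  rw [e1, e2, div_div_eq_mul_div, div_div_eq_mul_div]
  rw [div_add_div _ _ ha'.ne' hb'.ne', div_sub_div _ _ (mul_pos ha' hb').ne' ht0.ne',
    div_le_div_iff₀ (by positivity) hε]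
  have h6 : 2 * c * ((A ^ 2 + M * ε) * (B ^ 2 + M * ε)) * (t - ε)
      = 2 * c * (M ^ 2 * t ^ 2) * (t - ε) := by
    linear_combination (-(2 * c * (t - ε))) * htM
  nlinarith [mul_le_mul_of_nonneg_left key5M ht0.le, h6,
    mul_nonneg (sub_nonneg.2 hc)
      (mul_nonneg (mul_nonneg (sq_nonneg M) ht0.le) (sub_nonneg.2 htε))]

lemma LN_proj_le {m : ℕ} (d : Fin m → ℝ) :
    ∑ i, (d i - (∑ j, d j) / m) ^ 2 ≤ ∑ i, d i ^ 2 := by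
  rcases Nat.eq_zero_or_pos m with h | h
  · subst h; simp
  have hm0 : (0:ℝ) < m := by exact_mod_cast h
  set s := ∑ j, d j with hs
  have expand : ∑ i, (d i - s / m) ^ 2
      = ∑ i, d i ^ 2 - 2 * (s / m) * s + m * (s / m) ^ 2 := by
    have : ∀ i ∈ Finset.univ, (d i - s / m) ^ 2
        = d i ^ 2 - 2 * (s / m) * d i + (s / m) ^ 2 := by intro i _; ring
    rw [Finset.sum_congr rfl this, Finset.sum_add_distrib, Finset.sum_sub_distrib,
      Finset.sum_const, ← Finset.mul_sum, Finset.card_univ, Fintype.card_fin, ← hs]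
    ring
  have expand2 : ∑ i, (d i - s / m) ^ 2 = ∑ i, d i ^ 2 - s ^ 2 / m := by
    rw [expand]; field_simp; ring
  rw [expand2]
  linarith [div_nonneg (sq_nonneg s) hm0.le]

lemma LN_sum_sub_sq {m : ℕ} (u v : Fin m → ℝ) :
    ∑ i, (u i - v i) ^ 2 = ∑ i, u i ^ 2 + ∑ i, v i ^ 2 - 2 * ∑ i, u i * v i := by
  rw [← Finset.sum_add_distrib, Finset.mul_sum, ← Finset.sum_sub_distrib]
  apply Finset.sum_congr rfl; intro i _; ring

lemma LN_core {m : ℕ} (hm : 1 ≤ m) {ε : ℝ} (hε : 0 < ε) (u v : Fin m → ℝ) :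
    ∑ i, (u i / Real.sqrt ((∑ j, u j ^ 2) / m + ε)
        - v i / Real.sqrt ((∑ j, v j ^ 2) / m + ε)) ^ 2
      ≤ (∑ i, (u i - v i) ^ 2) / ε := by
  have hm0 : (0:ℝ) < m := by exact_mod_cast hm
  set U := ∑ j, u j ^ 2 with hU
  set V := ∑ j, v j ^ 2 with hV
  set c := ∑ j, u j * v j with hc
  have hU0 : 0 ≤ U := Finset.sum_nonneg fun i _ => sq_nonneg _
  have hV0 : 0 ≤ V := Finset.sum_nonneg fun i _ => sq_nonneg _
  set a := Real.sqrt (U / m + ε) with ha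
  set b := Real.sqrt (V / m + ε) with hb
  have ha0 : 0 < a := Real.sqrt_pos.2 (by positivity)
  have hb0 : 0 < b := Real.sqrt_pos.2 (by positivity)
  have ha2 : a ^ 2 = U / m + ε := Real.sq_sqrt (by positivity)
  have hb2 : b ^ 2 = V / m + ε := Real.sq_sqrt (by positivity)
  have expand : ∑ i, (u i / a - v i / b) ^ 2
      = U / a ^ 2 + V / b ^ 2 - 2 * c / (a * b) := by
    rw [hU, hV, hc, Finset.sum_div, Finset.sum_div, Finset.mul_sum, Finset.sum_div,
      ← Finset.sum_add_distrib, ← Finset.sum_sub_distrib]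
    apply Finset.sum_congr rfl; intro i _
    field_simp; ring
  have hAB : c ≤ Real.sqrt U * Real.sqrt V := by
    have h := Real.sum_mul_le_sqrt_mul_sqrt Finset.univ u v
    rw [← hU, ← hV, ← hc] at h
    exact h
  have hk := LN_key m (Real.sqrt U) (Real.sqrt V) c (a * b) ε
      (by exact_mod_cast hm) (Real.sqrt_nonneg _) (Real.sqrt_nonneg _) hAB hε
      (by rw [mul_pow, ha2, hb2, Real.sq_sqrt hU0, Real.sq_sqrt hV0])
      (mul_pos ha0 hb0)
  rw [Real.sq_sqrt hU0, Real.sq_sqrt hV0] at hk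
  rw [expand, LN_sum_sub_sq, ← hU, ← hV, ← hc]
  rw [← ha2, ← hb2] at hk
  exact hk

/-- Layer normalization `LN(z) = γ₁ ⊙ (z − μ(z)·1)/σ(z) + γ₂` with
`μ(z) = (1/m)·1ᵀz` and `σ(z) = √((1/m)‖z − μ(z)·1‖² + ε)`. -/
noncomputable def LN {m : ℕ} (ε : ℝ) (γ₁ γ₂ : Fin m → ℝ)
    (z : EuclideanSpace ℝ (Fin m)) : EuclideanSpace ℝ (Fin m) :=
  (WithLp.equiv 2 _).symm fun i =>
    γ₁ i * ((z i - (∑ j, z j) / m) /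
        Real.sqrt ((∑ j, (z j - (∑ l, z l) / m) ^ 2) / m + ε)) + γ₂ i

/-- LN is Lipschitz with constant at most `‖γ₁‖_∞ / √ε`. -/
theorem LN_lipschitz_upper {m : ℕ} (hm : 2 ≤ m) {ε : ℝ} (hε : 0 < ε)
    (γ₁ γ₂ : Fin m → ℝ) :
    ∀ z w : EuclideanSpace ℝ (Fin m),
      ‖LN ε γ₁ γ₂ z - LN ε γ₁ γ₂ w‖ ≤ ((⨆ i, |γ₁ i|) / Real.sqrt ε) * ‖z - w‖ := by
  intro z w
  haveI : Nonempty (Fin m) := ⟨⟨0, by omega⟩⟩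
  set G := ⨆ i, |γ₁ i| with hG
  have hbdd : BddAbove (Set.range fun i => |γ₁ i|) :=
    Set.Finite.bddAbove (Set.finite_range _)
  have hGi : ∀ i, |γ₁ i| ≤ G := fun i => le_ciSup hbdd i
  have hG0 : 0 ≤ G := le_trans (abs_nonneg _) (hGi ⟨0, by omega⟩)
  -- notation
  set u : Fin m → ℝ := fun i => z i - (∑ j, z j) / m with hu
  set v : Fin m → ℝ := fun i => w i - (∑ j, w j) / m with hv
  set a := Real.sqrt ((∑ j, u j ^ 2) / m + ε) with ha
  set b := Real.sqrt ((∑ j, v j ^ 2) / m + ε) with hb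
  have hcoord : ∀ i, (LN ε γ₁ γ₂ z - LN ε γ₁ γ₂ w) i
      = γ₁ i * (u i / a - v i / b) := by
    intro i
    simp only [LN, PiLp.sub_apply, WithLp.equiv_symm_apply, PiLp.toLp_apply, hu, hv, ha, hb]
    ring
  have hcoord2 : ∀ i, (z - w : EuclideanSpace ℝ (Fin m)) i = z i - w i := by
    intro i; simp [PiLp.sub_apply]
  have hnorm : ‖LN ε γ₁ γ₂ z - LN ε γ₁ γ₂ w‖
      = Real.sqrt (∑ i, (γ₁ i * (u i / a - v i / b)) ^ 2) := by
    rw [EuclideanSpace.norm_eq]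
    congr 1
    apply Finset.sum_congr rfl
    intro i _
    rw [hcoord i, Real.norm_eq_abs, sq_abs]
  have hnorm2 : ‖(z - w : EuclideanSpace ℝ (Fin m))‖
      = Real.sqrt (∑ i, (z i - w i) ^ 2) := by
    rw [EuclideanSpace.norm_eq]
    congr 1
    apply Finset.sum_congr rfl
    intro i _
    rw [hcoord2 i, Real.norm_eq_abs, sq_abs]
  -- step A : pull out G
  have stepA : ‖LN ε γ₁ γ₂ z - LN ε γ₁ γ₂ w‖
      ≤ G * Real.sqrt (∑ i, (u i / a - v i / b) ^ 2) := by
    rw [hnorm, ← Real.sqrt_sq hG0, ← Real.sqrt_mul (sq_nonneg G), Finset.mul_sum]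
    apply Real.sqrt_le_sqrt
    apply Finset.sum_le_sum
    intro i _
    rw [mul_pow]
    apply mul_le_mul_of_nonneg_right _ (sq_nonneg _)
    calc γ₁ i ^ 2 = |γ₁ i| ^ 2 := (sq_abs _).symm
      _ ≤ G ^ 2 := by nlinarith [hGi i, abs_nonneg (γ₁ i)]
  -- step B : core estimate
  have stepB : ∑ i, (u i / a - v i / b) ^ 2 ≤ (∑ i, (u i - v i) ^ 2) / ε :=
    LN_core (by omega) hε u v
  -- step C : projection contraction
  have stepC : ∑ i, (u i - v i) ^ 2 ≤ ∑ i, (z i - w i) ^ 2 := by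
    have heq : ∀ i ∈ Finset.univ, (u i - v i) ^ 2
        = ((z i - w i) - (∑ j, (z j - w j)) / m) ^ 2 := by
      intro i _
      rw [hu, hv, Finset.sum_sub_distrib]
      ring
    rw [Finset.sum_congr rfl heq]
    exact LN_proj_le fun i => z i - w i
  -- assemble
  have hεs : 0 < Real.sqrt ε := Real.sqrt_pos.2 hε
  calc ‖LN ε γ₁ γ₂ z - LN ε γ₁ γ₂ w‖
      ≤ G * Real.sqrt (∑ i, (u i / a - v i / b) ^ 2) := stepA
    _ ≤ G * Real.sqrt ((∑ i, (z i - w i) ^ 2) / ε) := by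
        apply mul_le_mul_of_nonneg_left _ hG0
        apply Real.sqrt_le_sqrt
        calc ∑ i, (u i / a - v i / b) ^ 2 ≤ (∑ i, (u i - v i) ^ 2) / ε := stepB
          _ ≤ (∑ i, (z i - w i) ^ 2) / ε := by gcongr
    _ = (G / Real.sqrt ε) * ‖z - w‖ := by
        rw [Real.sqrt_div (Finset.sum_nonneg fun i _ => sq_nonneg _), hnorm2]
        ring
end

section
/- The Lipschitz constant of layer normalization LN(z) = γ₁ ⊙ (z − μ(z)·1)/σ(z) + γ₂ is at least (‖γ₁‖_∞ / √ε)·√(1 − 1/m). -/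
lemma LN_lipschitz_lower_aux {m : ℕ} (hm : 2 ≤ m) {ε : ℝ} (hε : 0 < ε)
    (γ₁ γ₂ : Fin m → ℝ) (K : ℝ)
    (hK : ∀ z w : EuclideanSpace ℝ (Fin m),
      ‖LN ε γ₁ γ₂ z - LN ε γ₁ γ₂ w‖ ≤ K * ‖z - w‖) (i : Fin m) :
    |γ₁ i| * Real.sqrt (1 - 1 / m) / Real.sqrt ε ≤ K := by
  have hm0 : (0:ℝ) < m := by positivity
  have hmne : (m:ℝ) ≠ 0 := ne_of_gt hm0
  set S : ℝ := 1 - 1 / m with hSdef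
  have hS : 0 < S := by
    have : (1:ℝ) / m ≤ 1 / 2 := by
      apply one_div_le_one_div_of_le <;> norm_num
      exact_mod_cast hm
    simp only [hSdef]; linarith
  -- the per-t inequality
  have key : ∀ t : ℝ, 0 < t →
      |γ₁ i| * Real.sqrt S / Real.sqrt (t ^ 2 * S / m + ε) ≤ K := by
    intro t ht
    set v : Fin m → ℝ := fun j => (if j = i then 1 else 0) - 1 / m with hv
    have hsum : ∑ j, v j = 0 := by
      simp [hv, Finset.sum_sub_distrib, Finset.sum_ite_eq', Finset.card_univ]
      field_simp
      norm_num
    have hsq : ∑ j, v j ^ 2 = S := by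
      have h1 : ∀ j, v j ^ 2 = (if j = i then (1:ℝ) else 0) * (1 - 2/m) + (1/m)^2 := by
        intro j; simp only [hv]; split <;> ring
      rw [Finset.sum_congr rfl fun j _ => h1 j]
      simp [Finset.sum_add_distrib, ← Finset.sum_mul, Finset.sum_ite_eq', Finset.card_univ]
      rw [hSdef]
      field_simp
      ring
    set z : EuclideanSpace ℝ (Fin m) := (WithLp.equiv 2 _).symm (fun j => t * v j) with hz
    have hzj : ∀ j, z j = t * v j := fun j => rfl
    have hzsum : ∑ j, z j = 0 := by
      simp only [hzj, ← Finset.mul_sum, hsum, mul_zero]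
    have hzsq : ∑ j, (z j) ^ 2 = t ^ 2 * S := by
      simp only [hzj, mul_pow, ← Finset.mul_sum, hsq]
    set D : ℝ := Real.sqrt (t ^ 2 * S / m + ε) with hD
    have hDpos : 0 < D := Real.sqrt_pos.2 (by positivity)
    have hsum' : ∑ x, t * v x = 0 := by rw [← Finset.mul_sum, hsum, mul_zero]
    have hsq' : ∑ x, (t * v x) ^ 2 = t ^ 2 * S := by
      simp only [mul_pow, ← Finset.mul_sum, hsq]
    have hdiff : ∀ j, (LN ε γ₁ γ₂ z - LN ε γ₁ γ₂ 0) j = γ₁ j * (t * v j) / D := by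
      intro j
      have h0 : ∀ j : Fin m, (0 : EuclideanSpace ℝ (Fin m)) j = 0 := fun _ => rfl
      simp only [PiLp.sub_apply, LN, WithLp.equiv_symm_apply, PiLp.toLp_apply, h0, hzj]
      rw [hsum']
      simp only [zero_div, sub_zero]
      rw [hsq']
      simp [hD, mul_div_assoc]
    -- lower bound the norm of the difference by the i-th coordinate
    have hnorm_ge : |γ₁ i * (t * v i) / D| ≤ ‖LN ε γ₁ γ₂ z - LN ε γ₁ γ₂ 0‖ := by
      rw [EuclideanSpace.norm_eq]
      simp only [Real.norm_eq_abs, sq_abs]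
      rw [← Real.sqrt_sq_eq_abs]
      apply Real.sqrt_le_sqrt
      calc (γ₁ i * (t * v i) / D) ^ 2
          = ((LN ε γ₁ γ₂ z - LN ε γ₁ γ₂ 0) i) ^ 2 := by rw [hdiff i]
        _ ≤ ∑ x, ((LN ε γ₁ γ₂ z - LN ε γ₁ γ₂ 0) x) ^ 2 :=
            Finset.single_le_sum (f := fun x => ((LN ε γ₁ γ₂ z - LN ε γ₁ γ₂ 0) x) ^ 2)
              (fun j _ => sq_nonneg _) (Finset.mem_univ i)
    have hznorm : ‖z - 0‖ = t * Real.sqrt S := by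
      rw [sub_zero, EuclideanSpace.norm_eq]
      simp only [Real.norm_eq_abs, sq_abs]
      rw [hzsq, Real.sqrt_mul (sq_nonneg t), Real.sqrt_sq ht.le]
    have happ := hK z 0
    rw [hznorm] at happ
    have hvi : v i = S := by simp [hv, hSdef]
    have hlhs : |γ₁ i * (t * v i) / D| = (|γ₁ i| * Real.sqrt S / D) * (t * Real.sqrt S) := by
      have hSS : Real.sqrt S ^ 2 = 1 - 1 / (m:ℝ) := by
        rw [Real.sq_sqrt hS.le]
      rw [hvi, abs_div, abs_mul, abs_mul, abs_of_pos ht, abs_of_pos hDpos,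
        abs_of_pos hS]
      field_simp
      linear_combination (-(|γ₁ i|)) * hSS
    have : (|γ₁ i| * Real.sqrt S / D) * (t * Real.sqrt S) ≤ K * (t * Real.sqrt S) :=
      hlhs ▸ le_trans hnorm_ge happ
    have hts : 0 < t * Real.sqrt S := by positivity
    exact le_of_mul_le_mul_right this hts
  -- take the limit t → 0⁺
  have htend : Filter.Tendsto (fun t : ℝ => |γ₁ i| * Real.sqrt S / Real.sqrt (t ^ 2 * S / m + ε))
      (nhdsWithin 0 (Set.Ioi 0)) (nhds (|γ₁ i| * Real.sqrt S / Real.sqrt ε)) := by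
    have hc : ContinuousAt (fun t : ℝ => |γ₁ i| * Real.sqrt S / Real.sqrt (t ^ 2 * S / m + ε)) 0 := by
      apply ContinuousAt.div
      · exact continuousAt_const
      · exact (Real.continuous_sqrt.comp (by continuity)).continuousAt
      · simp only [ne_eq, zero_pow, zero_mul, zero_div, zero_add]
        positivity
    have h2 := hc.tendsto.mono_left (nhdsWithin_le_nhds (s := Set.Ioi (0:ℝ)))
    simpa using h2
  exact le_of_tendsto htend (Filter.eventually_of_mem self_mem_nhdsWithin fun t ht => key t ht)

/-- Any Lipschitz constant of LN is at least `(‖γ₁‖_∞ / √ε)·√(1 − 1/m)`. -/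
theorem LN_lipschitz_lower {m : ℕ} (hm : 2 ≤ m) {ε : ℝ} (hε : 0 < ε)
    (γ₁ γ₂ : Fin m → ℝ) (K : ℝ)
    (hK : ∀ z w : EuclideanSpace ℝ (Fin m),
      ‖LN ε γ₁ γ₂ z - LN ε γ₁ γ₂ w‖ ≤ K * ‖z - w‖) :
    ((⨆ i, |γ₁ i|) / Real.sqrt ε) * Real.sqrt (1 - 1 / m) ≤ K := by
  haveI : Nonempty (Fin m) := ⟨⟨0, by omega⟩⟩
  have hm0 : (0:ℝ) < m := by positivity
  have hS : (0:ℝ) < 1 - 1 / m := by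
    have : (1:ℝ) / m ≤ 1 / 2 := by
      apply one_div_le_one_div_of_le <;> norm_num
      exact_mod_cast hm
    linarith
  have hC : 0 < Real.sqrt (1 - 1 / (m:ℝ)) / Real.sqrt ε :=
    div_pos (Real.sqrt_pos.2 hS) (Real.sqrt_pos.2 hε)
  rw [div_mul_eq_mul_div, mul_div_assoc, ← le_div_iff₀ hC]
  apply ciSup_le
  intro i
  rw [le_div_iff₀ hC]
  have := LN_lipschitz_lower_aux hm hε γ₁ γ₂ K hK i
  calc |γ₁ i| * (Real.sqrt (1 - 1 / (m:ℝ)) / Real.sqrt ε)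
      = |γ₁ i| * Real.sqrt (1 - 1 / (m:ℝ)) / Real.sqrt ε := by ring
    _ ≤ K := this
end

section
/- Finite-horizon H² trace formula for the quadratic kernel: for h₂[t₁,t₂] = M(A^{t₁}B ⊗ A^{t₂}B) with M = [vec(M₁),…,vec(M_p)]ᵀ and each M_k Hermitian, the squared finite-horizon ℓ² norm satisfies Σ_{t₁=0}^{L−1} Σ_{t₂=0}^{L−1} ‖h₂[t₁,t₂]‖² = Σ_{k=1}^{p} tr(P_L M_k P_L M_k), where P_L = Σ_{t=0}^{L−1} Aᵗ B B* (A*)ᵗ. -/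
open Matrix

lemma frob_sq_eq_trace {m : ℕ} (C : Matrix (Fin m) (Fin m) ℂ) :
    (∑ j₁ : Fin m, ∑ j₂ : Fin m, ‖C j₁ j₂‖ ^ 2) = (Matrix.trace (C * Cᴴ)).re := by
  simp only [Matrix.trace, Matrix.diag, Matrix.mul_apply, Matrix.conjTranspose_apply,
    Complex.re_sum]
  refine Finset.sum_congr rfl fun j₁ _ => Finset.sum_congr rfl fun j₂ _ => ?_
  rw [show (star (C j₁ j₂)) = (starRingEnd ℂ) (C j₁ j₂) from rfl, Complex.mul_conj]
  simp [Complex.normSq_eq_norm_sq, ← Complex.ofReal_pow]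

lemma term_trace {n m : ℕ} (X Y Mk : Matrix (Fin n) (Fin n) ℂ)
    (B : Matrix (Fin n) (Fin m) ℂ) (hMk : Mk.IsHermitian) :
    Matrix.trace ((X*B)ᴴ * Mk * (Y*B) * ((X*B)ᴴ * Mk * (Y*B))ᴴ)
      = Matrix.trace ((X * B * Bᴴ * Xᴴ) * Mk * (Y * B * Bᴴ * Yᴴ) * Mk) := by
  have h : ((X*B)ᴴ * Mk * (Y*B))ᴴ = (Y*B)ᴴ * Mk * (X*B) := by
    simp [Matrix.conjTranspose_mul, hMk.eq, Matrix.mul_assoc]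
  rw [h]
  rw [Matrix.trace_mul_comm ((X*B)ᴴ * Mk * (Y*B))]
  simp only [Matrix.conjTranspose_mul, Matrix.mul_assoc]
  rw [Matrix.trace_mul_comm]
  simp only [Matrix.mul_assoc]
  rw [Matrix.trace_mul_comm Yᴴ]
  simp only [Matrix.mul_assoc]
  rw [Matrix.trace_mul_comm Mk]
  simp only [Matrix.mul_assoc]

/-- Finite-horizon H² trace formula for the quadratic kernel of an LQO system:
with `h₂[t₁,t₂]` the `p × m²` matrix whose `(k,(j₁,j₂))` entry is
`((A^{t₁}B)ᴴ M_k (A^{t₂}B))_{j₁ j₂}` and each `M_k` Hermitian,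
`Σ_{t₁,t₂<L} ‖h₂[t₁,t₂]‖_F² = Σ_k tr(P_L M_k P_L M_k)` with
`P_L = Σ_{t<L} Aᵗ B B* (A*)ᵗ`. -/
theorem quadratic_kernel_h2_trace {n m p L : ℕ}
    (A : Matrix (Fin n) (Fin n) ℂ) (B : Matrix (Fin n) (Fin m) ℂ)
    (M : Fin p → Matrix (Fin n) (Fin n) ℂ) (hM : ∀ k, (M k).IsHermitian) :
    (∑ t₁ ∈ Finset.range L, ∑ t₂ ∈ Finset.range L, ∑ k : Fin p, ∑ j₁ : Fin m, ∑ j₂ : Fin m,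
        ‖((A ^ t₁ * B)ᴴ * M k * (A ^ t₂ * B)) j₁ j₂‖ ^ 2)
      = (∑ k : Fin p,
          Matrix.trace ((∑ t ∈ Finset.range L, A ^ t * B * Bᴴ * (Aᴴ) ^ t) * M k *
            (∑ t ∈ Finset.range L, A ^ t * B * Bᴴ * (Aᴴ) ^ t) * M k)).re := by
  have key : ∀ t₁ t₂ : ℕ, ∀ k, (∑ j₁ : Fin m, ∑ j₂ : Fin m,
      ‖((A ^ t₁ * B)ᴴ * M k * (A ^ t₂ * B)) j₁ j₂‖ ^ 2)
      = (Matrix.trace ((A ^ t₁ * B * Bᴴ * (Aᴴ) ^ t₁) * M k *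
          (A ^ t₂ * B * Bᴴ * (Aᴴ) ^ t₂) * M k)).re := by
    intro t₁ t₂ k
    rw [frob_sq_eq_trace, term_trace (A ^ t₁) (A ^ t₂) (M k) B (hM k)]
    rw [Matrix.conjTranspose_pow, Matrix.conjTranspose_pow]
  simp only [key]
  rw [Finset.sum_congr rfl fun t₁ _ => Finset.sum_comm, Finset.sum_comm]
  simp only [Matrix.sum_mul, Matrix.mul_sum, Matrix.trace_sum, Complex.re_sum]
  exact Finset.sum_congr rfl fun k _ => Finset.sum_comm
end

section
/- Output error bound for a single LQO system pair: given kernels h₁, ĥ₁ (linear) and h₂, ĥ₂ (quadratic) and a common input u, if y_k = Σ_{t≤k} h₁[t]u_{k−t} + Σ_{t₁,t₂≤k} h₂[t₁,t₂](u_{k−t₁} ⊗ u_{k−t₂}) and ŷ_k is defined analogously with ĥ₁, ĥ₂, then ‖y − ŷ‖²_{ℓ^∞_L} ≤ (‖h₁ − ĥ₁‖²_{ℓ²_L} + ‖h₂ − ĥ₂‖²_{ℓ²_L}) · (1 + ‖u‖²_{ℓ²_L}) · ‖u‖²_{ℓ²_L}. -/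
set_option maxHeartbeats 1000000

/-- Euclidean norm of a finite vector of complex numbers. -/
noncomputable def normE {p : ℕ} (v : Fin p → ℂ) : ℝ := Real.sqrt (∑ i, ‖v i‖ ^ 2)

/-- Frobenius norm of a complex matrix. -/
noncomputable def normF {p q : Type*} [Fintype p] [Fintype q] (M : Matrix p q ℂ) : ℝ :=
  Real.sqrt (∑ i, ∑ j, ‖M i j‖ ^ 2)

/-- Kronecker product of two vectors. -/
def kron {m : ℕ} (a b : Fin m → ℂ) : Fin m × Fin m → ℂ := fun x => a x.1 * b x.2

noncomputable def nE {ι : Type*} [Fintype ι] (v : ι → ℂ) : ℝ := Real.sqrt (∑ i, ‖v i‖ ^ 2)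
noncomputable def nF {ι κ : Type*} [Fintype ι] [Fintype κ] (M : Matrix ι κ ℂ) : ℝ :=
  Real.sqrt (∑ i, ∑ j, ‖M i j‖ ^ 2)

lemma normE_eq_nE {p : ℕ} (v : Fin p → ℂ) : normE v = nE v := rfl
lemma normF_eq_nF {p q : Type*} [Fintype p] [Fintype q] (M : Matrix p q ℂ) :
    normF M = nF M := rfl

lemma nE_nonneg {ι : Type*} [Fintype ι] (v : ι → ℂ) : 0 ≤ nE v := Real.sqrt_nonneg _
lemma nF_nonneg {ι κ : Type*} [Fintype ι] [Fintype κ] (M : Matrix ι κ ℂ) : 0 ≤ nF M :=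
  Real.sqrt_nonneg _

lemma nE_sq {ι : Type*} [Fintype ι] (v : ι → ℂ) : nE v ^ 2 = ∑ i, ‖v i‖ ^ 2 :=
  Real.sq_sqrt (Finset.sum_nonneg fun _ _ => by positivity)

lemma nF_sq {ι κ : Type*} [Fintype ι] [Fintype κ] (M : Matrix ι κ ℂ) :
    nF M ^ 2 = ∑ i, ∑ j, ‖M i j‖ ^ 2 :=
  Real.sq_sqrt (Finset.sum_nonneg fun _ _ => Finset.sum_nonneg fun _ _ => by positivity)

lemma nE_eq_norm {ι : Type*} [Fintype ι] (v : ι → ℂ) :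
    nE v = ‖(WithLp.linearEquiv 2 ℂ (ι → ℂ)).symm v‖ := by
  rw [EuclideanSpace.norm_eq]; rfl

lemma nE_add_le {ι : Type*} [Fintype ι] (v w : ι → ℂ) : nE (v + w) ≤ nE v + nE w := by
  simp only [nE_eq_norm, map_add]; exact norm_add_le _ _

lemma nE_sum_le {ι κ : Type*} [Fintype ι] (s : Finset κ) (f : κ → ι → ℂ) :
    nE (∑ k ∈ s, f k) ≤ ∑ k ∈ s, nE (f k) := by
  simp only [nE_eq_norm, map_sum]; exact norm_sum_le _ _

lemma nE_mulVec_le {ι κ : Type*} [Fintype ι] [Fintype κ] (M : Matrix ι κ ℂ) (v : κ → ℂ) :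
    nE (M.mulVec v) ≤ nF M * nE v := by
  have h1 : ∀ i, ‖M.mulVec v i‖ ^ 2 ≤ (∑ j, ‖M i j‖ ^ 2) * ∑ j, ‖v j‖ ^ 2 := by
    intro i
    have h : ‖M.mulVec v i‖ ≤ ∑ j, ‖M i j‖ * ‖v j‖ :=
      (norm_sum_le _ _).trans (le_of_eq (Finset.sum_congr rfl fun j _ => norm_mul _ _))
    calc ‖M.mulVec v i‖ ^ 2 ≤ (∑ j, ‖M i j‖ * ‖v j‖) ^ 2 :=
          pow_le_pow_left₀ (norm_nonneg _) h 2
      _ ≤ (∑ j, ‖M i j‖ ^ 2) * ∑ j, ‖v j‖ ^ 2 := Finset.sum_mul_sq_le_sq_mul_sq _ _ _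
  have h2 : nE (M.mulVec v) ^ 2 ≤ (nF M * nE v) ^ 2 := by
    rw [nE_sq, mul_pow, nF_sq, nE_sq, Finset.sum_mul]
    exact Finset.sum_le_sum fun i _ => h1 i
  exact le_of_sq_le_sq h2 (mul_nonneg (nF_nonneg _) (nE_nonneg _))

lemma nE_kron {m : ℕ} (a b : Fin m → ℂ) : nE (kron a b) = nE a * nE b := by
  unfold nE
  rw [← Real.sqrt_mul (Finset.sum_nonneg fun _ _ => by positivity)]
  congr 1
  rw [Fintype.sum_prod_type, Finset.sum_mul_sum]
  exact Finset.sum_congr rfl fun i _ => Finset.sum_congr rfl fun j _ => by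
    simp [kron, norm_mul, mul_pow]

/-- Output error bound for a pair of LQO systems driven by a common input:
`‖y − z‖²_{ℓ∞_L} ≤ (‖h₁ − g₁‖²_{ℓ²_L} + ‖h₂ − g₂‖²_{ℓ²_L}) (1 + ‖u‖²_{ℓ²_L}) ‖u‖²_{ℓ²_L}`. -/
theorem lqo_output_error_bound {m p L : ℕ} (hL : 0 < L)
    (h₁ g₁ : ℕ → Matrix (Fin p) (Fin m) ℂ)
    (h₂ g₂ : ℕ → ℕ → Matrix (Fin p) (Fin m × Fin m) ℂ)
    (u : ℕ → Fin m → ℂ) (y z : ℕ → Fin p → ℂ)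
    (hy : ∀ k, y k = (∑ t ∈ Finset.range (k + 1), (h₁ t).mulVec (u (k - t)))
        + ∑ t₁ ∈ Finset.range (k + 1), ∑ t₂ ∈ Finset.range (k + 1),
            (h₂ t₁ t₂).mulVec (kron (u (k - t₁)) (u (k - t₂))))
    (hz : ∀ k, z k = (∑ t ∈ Finset.range (k + 1), (g₁ t).mulVec (u (k - t)))
        + ∑ t₁ ∈ Finset.range (k + 1), ∑ t₂ ∈ Finset.range (k + 1),
            (g₂ t₁ t₂).mulVec (kron (u (k - t₁)) (u (k - t₂)))) :
    ((Finset.range L).sup' (Finset.nonempty_range_iff.mpr hL.ne')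
        fun k => normE (y k - z k)) ^ 2
      ≤ ((∑ t ∈ Finset.range L, normF (h₁ t - g₁ t) ^ 2)
          + ∑ t₁ ∈ Finset.range L, ∑ t₂ ∈ Finset.range L,
              normF (h₂ t₁ t₂ - g₂ t₁ t₂) ^ 2)
        * (1 + ∑ k ∈ Finset.range L, normE (u k) ^ 2)
        * (∑ k ∈ Finset.range L, normE (u k) ^ 2) := by
  classical
  set E1 : ℝ := ∑ t ∈ Finset.range L, normF (h₁ t - g₁ t) ^ 2 with hE1
  set E2 : ℝ := ∑ t₁ ∈ Finset.range L, ∑ t₂ ∈ Finset.range L,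
      normF (h₂ t₁ t₂ - g₂ t₁ t₂) ^ 2 with hE2
  set U : ℝ := ∑ k ∈ Finset.range L, normE (u k) ^ 2 with hU
  have hE1n : 0 ≤ E1 := Finset.sum_nonneg fun _ _ => by positivity
  have hE2n : 0 ≤ E2 := Finset.sum_nonneg fun _ _ => Finset.sum_nonneg fun _ _ => by positivity
  have hUn : 0 ≤ U := Finset.sum_nonneg fun _ _ => by positivity
  -- the input energy over any window fits in U
  have hwin : ∀ k, k < L → ∑ t ∈ Finset.range (k + 1), nE (u (k - t)) ^ 2 ≤ U := by
    intro k hk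
    have hre : ∑ t ∈ Finset.range (k + 1), nE (u (k - t)) ^ 2
        = ∑ t ∈ Finset.range (k + 1), nE (u t) ^ 2 := by
      have := Finset.sum_range_reflect (fun t => nE (u t) ^ 2) (k + 1)
      simpa using this
    rw [hre, hU]
    refine Finset.sum_le_sum_of_subset_of_nonneg (Finset.range_subset_range.2 hk) ?_
    intro i _ _; positivity
  -- per-step bound
  have key : ∀ k, k < L →
      nE (y k - z k) ≤ Real.sqrt E1 * Real.sqrt U + Real.sqrt E2 * U := by
    intro k hk
    have hdecomp : y k - z k
        = (∑ t ∈ Finset.range (k + 1), (h₁ t - g₁ t).mulVec (u (k - t)))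
          + ∑ t₁ ∈ Finset.range (k + 1), ∑ t₂ ∈ Finset.range (k + 1),
              (h₂ t₁ t₂ - g₂ t₁ t₂).mulVec (kron (u (k - t₁)) (u (k - t₂))) := by
      rw [hy, hz]
      simp only [Matrix.sub_mulVec, Finset.sum_sub_distrib]
      abel
    have tri : nE (y k - z k)
        ≤ (∑ t ∈ Finset.range (k + 1), nE ((h₁ t - g₁ t).mulVec (u (k - t))))
          + ∑ t₁ ∈ Finset.range (k + 1), ∑ t₂ ∈ Finset.range (k + 1),
              nE ((h₂ t₁ t₂ - g₂ t₁ t₂).mulVec (kron (u (k - t₁)) (u (k - t₂)))) := by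
      rw [hdecomp]
      refine (nE_add_le _ _).trans (add_le_add (nE_sum_le _ _) ?_)
      refine (nE_sum_le _ _).trans (Finset.sum_le_sum fun t₁ _ => nE_sum_le _ _)
    -- bound linear part
    have lin : (∑ t ∈ Finset.range (k + 1), nE ((h₁ t - g₁ t).mulVec (u (k - t))))
        ≤ Real.sqrt E1 * Real.sqrt U := by
      calc ∑ t ∈ Finset.range (k + 1), nE ((h₁ t - g₁ t).mulVec (u (k - t)))
          ≤ ∑ t ∈ Finset.range (k + 1), nF (h₁ t - g₁ t) * nE (u (k - t)) :=
            Finset.sum_le_sum fun t _ => nE_mulVec_le _ _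
        _ ≤ Real.sqrt (∑ t ∈ Finset.range (k + 1), nF (h₁ t - g₁ t) ^ 2)
              * Real.sqrt (∑ t ∈ Finset.range (k + 1), nE (u (k - t)) ^ 2) :=
            Real.sum_mul_le_sqrt_mul_sqrt _ _ _
        _ ≤ Real.sqrt E1 * Real.sqrt U := by
            refine mul_le_mul (Real.sqrt_le_sqrt ?_) (Real.sqrt_le_sqrt (hwin k hk))
              (Real.sqrt_nonneg _) (Real.sqrt_nonneg _)
            rw [hE1]
            refine Finset.sum_le_sum_of_subset_of_nonneg (Finset.range_subset_range.2 hk) ?_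
            intro i _ _; positivity
    -- bound quadratic part
    have quad : (∑ t₁ ∈ Finset.range (k + 1), ∑ t₂ ∈ Finset.range (k + 1),
            nE ((h₂ t₁ t₂ - g₂ t₁ t₂).mulVec (kron (u (k - t₁)) (u (k - t₂)))))
        ≤ Real.sqrt E2 * U := by
      have step1 : (∑ t₁ ∈ Finset.range (k + 1), ∑ t₂ ∈ Finset.range (k + 1),
              nE ((h₂ t₁ t₂ - g₂ t₁ t₂).mulVec (kron (u (k - t₁)) (u (k - t₂)))))
          ≤ ∑ x ∈ Finset.range (k + 1) ×ˢ Finset.range (k + 1),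
              nF (h₂ x.1 x.2 - g₂ x.1 x.2) * (nE (u (k - x.1)) * nE (u (k - x.2))) := by
        rw [Finset.sum_product]
        refine Finset.sum_le_sum fun t₁ _ => Finset.sum_le_sum fun t₂ _ => ?_
        refine (nE_mulVec_le _ _).trans_eq ?_
        rw [nE_kron]
      refine step1.trans ?_
      have cs := Real.sum_mul_le_sqrt_mul_sqrt
        (Finset.range (k + 1) ×ˢ Finset.range (k + 1))
        (fun x => nF (h₂ x.1 x.2 - g₂ x.1 x.2))
        (fun x => nE (u (k - x.1)) * nE (u (k - x.2)))
      refine cs.trans ?_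
      have e1 : Real.sqrt (∑ x ∈ Finset.range (k + 1) ×ˢ Finset.range (k + 1),
            nF (h₂ x.1 x.2 - g₂ x.1 x.2) ^ 2) ≤ Real.sqrt E2 := by
        refine Real.sqrt_le_sqrt ?_
        rw [Finset.sum_product, hE2]
        refine Finset.sum_le_sum_of_subset_of_nonneg (Finset.range_subset_range.2 hk) ?_
          |>.trans (Finset.sum_le_sum fun t₁ _ => ?_)
        · intro i _ _
          exact Finset.sum_nonneg fun _ _ => by positivity
        · refine Finset.sum_le_sum_of_subset_of_nonneg (Finset.range_subset_range.2 hk) ?_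
          intro i _ _; positivity
      have e2 : Real.sqrt (∑ x ∈ Finset.range (k + 1) ×ˢ Finset.range (k + 1),
            (nE (u (k - x.1)) * nE (u (k - x.2))) ^ 2) ≤ U := by
        have : (∑ x ∈ Finset.range (k + 1) ×ˢ Finset.range (k + 1),
              (nE (u (k - x.1)) * nE (u (k - x.2))) ^ 2)
            = (∑ t ∈ Finset.range (k + 1), nE (u (k - t)) ^ 2)
              * ∑ t ∈ Finset.range (k + 1), nE (u (k - t)) ^ 2 := by
          rw [Finset.sum_mul_sum, Finset.sum_product]
          exact Finset.sum_congr rfl fun t₁ _ => Finset.sum_congr rfl fun t₂ _ => by ring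
        rw [this, ← sq, Real.sqrt_sq (Finset.sum_nonneg fun _ _ => by positivity)]
        exact hwin k hk
      exact mul_le_mul e1 e2 (Real.sqrt_nonneg _) (Real.sqrt_nonneg _)
    calc nE (y k - z k) ≤ _ := tri
      _ ≤ Real.sqrt E1 * Real.sqrt U + Real.sqrt E2 * U := add_le_add lin quad
  -- combine
  set B : ℝ := Real.sqrt E1 * Real.sqrt U + Real.sqrt E2 * U with hB
  have hBn : 0 ≤ B := add_nonneg (mul_nonneg (Real.sqrt_nonneg _) (Real.sqrt_nonneg _)) (mul_nonneg (Real.sqrt_nonneg _) hUn)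
  have hsup : ((Finset.range L).sup' (Finset.nonempty_range_iff.mpr hL.ne')
      fun k => normE (y k - z k)) ≤ B := by
    refine Finset.sup'_le _ _ fun k hk => ?_
    rw [normE_eq_nE]
    exact key k (Finset.mem_range.mp hk)
  have hsupn : 0 ≤ (Finset.range L).sup' (Finset.nonempty_range_iff.mpr hL.ne')
      fun k => normE (y k - z k) := by
    exact le_trans (nE_nonneg (y 0 - z 0))
      (Finset.le_sup' (fun k => normE (y k - z k)) (Finset.mem_range.mpr hL))
  have hsq : ((Finset.range L).sup' (Finset.nonempty_range_iff.mpr hL.ne')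
      fun k => normE (y k - z k)) ^ 2 ≤ B ^ 2 := pow_le_pow_left₀ hsupn hsup 2
  refine hsq.trans ?_
  have s1 : Real.sqrt E1 ^ 2 = E1 := Real.sq_sqrt hE1n
  have s2 : Real.sqrt E2 ^ 2 = E2 := Real.sq_sqrt hE2n
  have s3 : Real.sqrt U ^ 2 = U := Real.sq_sqrt hUn
  have expand : B ^ 2 = Real.sqrt E1 ^ 2 * Real.sqrt U ^ 2
      + 2 * (Real.sqrt E1 * Real.sqrt U) * (Real.sqrt E2 * U)
      + Real.sqrt E2 ^ 2 * U ^ 2 := by rw [hB]; ring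
  rw [s1, s2, s3] at expand
  have cross : 2 * (Real.sqrt E1 * Real.sqrt U) * (Real.sqrt E2 * U)
      ≤ E1 * U ^ 2 + E2 * U := by
    calc 2 * (Real.sqrt E1 * Real.sqrt U) * (Real.sqrt E2 * U)
        = 2 * (Real.sqrt E1 * U) * (Real.sqrt E2 * Real.sqrt U) := by ring
      _ ≤ (Real.sqrt E1 * U) ^ 2 + (Real.sqrt E2 * Real.sqrt U) ^ 2 := two_mul_le_add_sq _ _
      _ = E1 * U ^ 2 + E2 * U := by rw [mul_pow, mul_pow, s1, s2, s3]
  have htgt : (E1 + E2) * (1 + U) * U = E1 * U + (E1 * U ^ 2 + E2 * U) + E2 * U ^ 2 := by ring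
  rw [htgt]
  linarith [expand, cross]
end
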